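/- Under the recursion ‖x^{k+1}−x*‖² ≤ (C/μ²)‖x^k−x*‖²·H^k + (D/(2μ²))‖x^k−x*‖⁴ with C, D > 0, if ‖x^0−x*‖² ≤ μ²/(2D) and H^k ≤ μ²/(4C) for all k ≥ 0, then ‖x^k−x*‖² ≤ μ²/(2D) and ‖x^{k+1}−x*‖² ≤ ½‖x^k−x*‖² for all k ≥ 0; in particular ‖x^k−x*‖² ≤ 2^{-k}‖x^0−x*‖². -/

import Mathlib

/-- Under the recursion
`‖x^{k+1}−x*‖² ≤ (C/μ²)‖x^k−x*‖²·H^k + (D/(2μ²))‖x^k−x*‖⁴`,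
with `‖x^0−x*‖² ≤ μ²/(2D)` and `H^k ≤ μ²/(4C)` for all `k`, the iterates stay in the
neighborhood, halve the squared distance each step, and converge linearly. -/
theorem local_linear_rate {E : Type*} [NormedAddCommGroup E]
    (x : ℕ → E) (xstar : E) (H : ℕ → ℝ) (μ C D : ℝ)
    (hμ : 0 < μ) (hC : 0 < C) (hD : 0 < D) (hH : ∀ k, 0 ≤ H k)
    (hrec : ∀ k, ‖x (k+1) - xstar‖^2 ≤
      C/μ^2 * ‖x k - xstar‖^2 * H k + D/(2*μ^2) * ‖x k - xstar‖^4)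
    (h0 : ‖x 0 - xstar‖^2 ≤ μ^2/(2*D))
    (hHk : ∀ k, H k ≤ μ^2/(4*C)) :
    (∀ k, ‖x k - xstar‖^2 ≤ μ^2/(2*D)) ∧
    (∀ k, ‖x (k+1) - xstar‖^2 ≤ 1/2 * ‖x k - xstar‖^2) ∧
    (∀ k, ‖x k - xstar‖^2 ≤ (1/2)^k * ‖x 0 - xstar‖^2) := by
  have hμ2 : (0:ℝ) < μ^2 := by positivity
  have key : ∀ k, ‖x k - xstar‖^2 ≤ μ^2/(2*D) →
      ‖x (k+1) - xstar‖^2 ≤ 1/2 * ‖x k - xstar‖^2 := by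
    intro k hk
    set a := ‖x k - xstar‖^2 with ha
    have ha0 : 0 ≤ a := by positivity
    have h1 : C/μ^2 * a * H k ≤ C/μ^2 * a * (μ^2/(4*C)) := by
      apply mul_le_mul_of_nonneg_left (hHk k) (by positivity)
    have h2 : D/(2*μ^2) * ‖x k - xstar‖^4 ≤ D/(2*μ^2) * (a * (μ^2/(2*D))) := by
      have : ‖x k - xstar‖^4 = a * a := by rw [ha]; ring
      rw [this]
      apply mul_le_mul_of_nonneg_left (mul_le_mul_of_nonneg_left hk ha0) (by positivity)
    have e1 : C/μ^2 * a * (μ^2/(4*C)) = a/4 := by field_simp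
    have e2 : D/(2*μ^2) * (a * (μ^2/(2*D))) = a/4 := by field_simp; ring
    calc ‖x (k+1) - xstar‖^2 ≤ C/μ^2 * a * H k + D/(2*μ^2) * ‖x k - xstar‖^4 := hrec k
      _ ≤ a/4 + a/4 := by linarith
      _ = 1/2 * a := by ring
  have hbdd : ∀ k, ‖x k - xstar‖^2 ≤ μ^2/(2*D) := by
    intro k
    induction k with
    | zero => exact h0
    | succ n ih =>
      calc ‖x (n+1) - xstar‖^2 ≤ 1/2 * ‖x n - xstar‖^2 := key n ih
        _ ≤ 1/2 * (μ^2/(2*D)) := by linarith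
        _ ≤ μ^2/(2*D) := by
            have : (0:ℝ) ≤ μ^2/(2*D) := by positivity
            linarith
  refine ⟨hbdd, fun k => key k (hbdd k), ?_⟩
  intro k
  induction k with
  | zero => simp
  | succ n ih =>
    calc ‖x (n+1) - xstar‖^2 ≤ 1/2 * ‖x n - xstar‖^2 := key n (hbdd n)
      _ ≤ 1/2 * ((1/2)^n * ‖x 0 - xstar‖^2) := by linarith
      _ = (1/2)^(n+1) * ‖x 0 - xstar‖^2 := by ring
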